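/- Let d ≥ 1 and let Φ : (0,∞) → [0,∞) be measurable. For t > 0 let η_t be a Borel probability measure on (0,∞) with ∫_{(0,∞)} e^{-λu} η_t(du) = e^{-tΦ(λ)} for all λ > 0, and define the subordinated periodized kernel p^M_t(x,y) = ∫_{(0,∞)} g^M_u(x,y) η_t(du), where g^M_u(x,y) = Σ_{i ∈ Mℤ^d} (4πu)^{-d/2} exp(-|x-y-i|²/(4u)). Then there exists a constant C > 0 depending only on d such that for every M ∈ ℤ₊, every x, y ∈ ℝ^d and every t > 0 one has p^M_t(x,y) ≤ C · max(∫_0^∞ e^{-tΦ(λ^{2/d})} dλ, M^{-d}). -/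

import Mathlib

open MeasureTheory Filter Set Topology

open scoped ENNReal

lemma gauss_tail (b : ℝ) (hb : 0 < b) :
    ∑' n : ℕ, ENNReal.ofReal (Real.exp (-b * ((n:ℝ)+1)^2))
      ≤ ENNReal.ofReal (1 + 2 * (Real.sqrt b)⁻¹) := by
  have hsb : 0 < Real.sqrt b := Real.sqrt_pos.2 hb
  set N : ℕ := ⌈(Real.sqrt b)⁻¹⌉₊ with hN
  have hNr : (Real.sqrt b)⁻¹ ≤ (N : ℝ) := Nat.le_ceil _
  have hNpos : (0:ℝ) < N := lt_of_lt_of_le (by positivity) hNr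
  set f : ℕ → ℝ≥0∞ := fun n => ENNReal.ofReal (Real.exp (-b * ((n:ℝ)+1)^2)) with hf
  have hsplit : ∑' n, f n = (∑ i ∈ Finset.range N, f i) + ∑' n, f (n + N) :=
    (Summable.sum_add_tsum_nat_add' (ENNReal.summable)).symm
  have hhead : (∑ i ∈ Finset.range N, f i) ≤ (N : ℝ≥0∞) := by
    calc (∑ i ∈ Finset.range N, f i) ≤ ∑ _i ∈ Finset.range N, 1 := by
          apply Finset.sum_le_sum
          intro i _
          simp only [hf]
          rw [← ENNReal.ofReal_one]
          exact ENNReal.ofReal_le_ofReal (Real.exp_le_one_iff.2 (by nlinarith [hb.le, sq_nonneg ((i:ℝ)+1)]))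
      _ = (N : ℝ≥0∞) := by simp
  set c : ℝ := b * N with hc
  have hcpos : 0 < c := by positivity
  set r : ℝ≥0∞ := ENNReal.ofReal (Real.exp (-c)) with hr
  have hterm : ∀ n : ℕ, f (n + N) ≤ r ^ (n+1) := by
    intro n
    rw [hr, ← ENNReal.ofReal_pow (Real.exp_nonneg _), ← Real.exp_nat_mul]
    apply ENNReal.ofReal_le_ofReal
    apply Real.exp_le_exp.2
    have hgeom : (N:ℝ) * ((n:ℝ)+1) ≤ (((n:ℝ)+(N:ℝ))+1)^2 := by nlinarith [Nat.cast_nonneg (α := ℝ) n]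
    push_cast
    nlinarith [hgeom]
  have htail : ∑' n, f (n + N) ≤ r * (1 - r)⁻¹ := by
    calc ∑' n, f (n + N) ≤ ∑' n : ℕ, r ^ (n+1) := ENNReal.tsum_le_tsum hterm
      _ = (∑' n : ℕ, r ^ n) * r := by
          simp_rw [pow_succ]
          exact ENNReal.tsum_mul_right
      _ = (1 - r)⁻¹ * r := by rw [ENNReal.tsum_geometric]
      _ = r * (1 - r)⁻¹ := by ring
  have he1 : Real.exp (-c) < 1 := Real.exp_lt_one_iff.2 (by linarith)
  have hrc : r * (1 - r)⁻¹ ≤ ENNReal.ofReal ((Real.sqrt b)⁻¹) := by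
    have h1r : (1:ℝ≥0∞) - r = ENNReal.ofReal (1 - Real.exp (-c)) := by
      rw [ENNReal.ofReal_sub _ (Real.exp_nonneg _), ENNReal.ofReal_one]
    rw [h1r, ← ENNReal.ofReal_inv_of_pos (by linarith), ← ENNReal.ofReal_mul (Real.exp_nonneg _)]
    apply ENNReal.ofReal_le_ofReal
    have key : Real.exp (-c) * (1 - Real.exp (-c))⁻¹ ≤ c⁻¹ := by
      rw [← div_eq_mul_inv, ← one_div c, div_le_div_iff₀ (by linarith) hcpos]
      have h2 := Real.add_one_le_exp c
      have h3 : (c+1) * Real.exp (-c) ≤ Real.exp c * Real.exp (-c) :=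
        mul_le_mul_of_nonneg_right (by linarith) (Real.exp_nonneg _)
      rw [← Real.exp_add] at h3
      simp at h3
      nlinarith [h3]
    refine key.trans ?_
    apply inv_anti₀ hsb
    calc Real.sqrt b = Real.sqrt b * Real.sqrt b * (Real.sqrt b)⁻¹ := by
          field_simp
      _ = b * (Real.sqrt b)⁻¹ := by rw [Real.mul_self_sqrt hb.le]
      _ ≤ b * N := mul_le_mul_of_nonneg_left hNr hb.le
  have hNle : (N : ℝ≥0∞) ≤ ENNReal.ofReal ((Real.sqrt b)⁻¹ + 1) := by
    rw [← ENNReal.ofReal_natCast]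
    exact ENNReal.ofReal_le_ofReal (le_of_lt (Nat.ceil_lt_add_one (by positivity)))
  calc ∑' n, f n = (∑ i ∈ Finset.range N, f i) + ∑' n, f (n + N) := hsplit
    _ ≤ ENNReal.ofReal ((Real.sqrt b)⁻¹ + 1) + ENNReal.ofReal ((Real.sqrt b)⁻¹) :=
        add_le_add (hhead.trans hNle) (htail.trans hrc)
    _ = ENNReal.ofReal (1 + 2 * (Real.sqrt b)⁻¹) := by
        rw [← ENNReal.ofReal_add (by positivity) (by positivity)]
        ring_nf

lemma gauss_int (b : ℝ) (hb : 0 < b) :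
    ∑' k : ℤ, ENNReal.ofReal (Real.exp (-b * (k:ℝ)^2))
      ≤ ENNReal.ofReal (4 + 4 * (Real.sqrt b)⁻¹) := by
  set g : ℤ → ℝ≥0∞ := fun k => ENNReal.ofReal (Real.exp (-b * (k:ℝ)^2)) with hg
  have hsplit : ∑' k : ℤ, g k = (∑' n : ℕ, g n) + ∑' n : ℕ, g (-(n+1)) :=
    tsum_of_nat_of_neg_add_one ENNReal.summable ENNReal.summable
  have hpos : ∑' n : ℕ, g ((n:ℤ)) ≤ 1 + ENNReal.ofReal (1 + 2 * (Real.sqrt b)⁻¹) := by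
    rw [tsum_eq_zero_add' (f := fun n : ℕ => g n) ENNReal.summable]
    apply add_le_add
    · simp [hg]
    · refine le_trans (le_of_eq ?_) (gauss_tail b hb)
      apply tsum_congr
      intro n
      simp only [hg]
      push_cast
      ring_nf
  have hneg : ∑' n : ℕ, g (-((n:ℤ)+1)) ≤ ENNReal.ofReal (1 + 2 * (Real.sqrt b)⁻¹) := by
    refine le_trans (le_of_eq ?_) (gauss_tail b hb)
    apply tsum_congr
    intro n
    simp only [hg]
    push_cast
    ring_nf
  calc ∑' k : ℤ, g k ≤ (1 + ENNReal.ofReal (1 + 2 * (Real.sqrt b)⁻¹))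
        + ENNReal.ofReal (1 + 2 * (Real.sqrt b)⁻¹) := by
        rw [hsplit]; exact add_le_add hpos hneg
    _ ≤ ENNReal.ofReal (4 + 4 * (Real.sqrt b)⁻¹) := by
        rw [← ENNReal.ofReal_one, ← ENNReal.ofReal_add (by norm_num) (by positivity),
          ← ENNReal.ofReal_add (by positivity) (by positivity)]
        apply ENNReal.ofReal_le_ofReal
        nlinarith [inv_nonneg.2 (Real.sqrt_nonneg b)]

lemma onedim (M : ℕ) (hM : 0 < M) (u z : ℝ) (hu : 0 < u) :
    ∑' k : ℤ, ENNReal.ofReal (Real.exp (-(z - (M:ℝ)*(k:ℝ))^2 / (4*u)))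
      ≤ ENNReal.ofReal (4 + 16 * Real.sqrt u / (M:ℝ)) := by
  have hMR : (0:ℝ) < M := by exact_mod_cast hM
  set j0 : ℤ := round (z / M) with hj0
  set r : ℝ := z - M * j0 with hr
  have habs : |r| ≤ M / 2 := by
    have h1 : |z / M - round (z / M)| ≤ 1/2 := abs_sub_round _
    have h2 : r = (z / M - round (z / M)) * M := by
      rw [hr, hj0, sub_mul, div_mul_cancel₀ _ hMR.ne']; ring
    rw [h2, abs_mul, abs_of_pos hMR]
    nlinarith [h1, hMR.le]
  set b : ℝ := M^2 / (16 * u) with hb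
  have hbpos : 0 < b := by positivity
  -- reindex
  have hre : ∑' k : ℤ, ENNReal.ofReal (Real.exp (-(z - (M:ℝ)*(k:ℝ))^2 / (4*u)))
      = ∑' k : ℤ, ENNReal.ofReal (Real.exp (-(z - (M:ℝ)*((j0 + k : ℤ):ℝ))^2 / (4*u))) :=
    ((Equiv.addLeft j0).tsum_eq
      (fun k : ℤ => ENNReal.ofReal (Real.exp (-(z - (M:ℝ)*(k:ℝ))^2 / (4*u))))).symm
  rw [hre]
  have hterm : ∀ k : ℤ, ENNReal.ofReal (Real.exp (-(z - (M:ℝ)*((j0 + k : ℤ):ℝ))^2 / (4*u)))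
      ≤ ENNReal.ofReal (Real.exp (-b * (k:ℝ)^2)) := by
    intro k
    apply ENNReal.ofReal_le_ofReal
    apply Real.exp_le_exp.2
    have hz : z - (M:ℝ)*((j0 + k : ℤ):ℝ) = r - M * k := by push_cast [hr]; ring
    rw [hz]
    have hsq : (M:ℝ)^2 * (k:ℝ)^2 / 4 ≤ (r - M * (k:ℝ))^2 := by
      rcases eq_or_ne k 0 with h0 | h0
      · subst h0; simp; positivity
      · have hk1 : (1:ℝ) ≤ |(k:ℝ)| := by
          rw [← Int.cast_abs]
          exact_mod_cast Int.one_le_abs (by exact_mod_cast h0)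
        have h2 : (M:ℝ) * |(k:ℝ)| / 2 ≤ |r - M * (k:ℝ)| := by
          have h3 : |(M:ℝ) * (k:ℝ)| - |r| ≤ |(M:ℝ) * (k:ℝ) - r| := by
            exact abs_sub_abs_le_abs_sub _ _
          rw [abs_mul, abs_of_pos hMR, abs_sub_comm ((M:ℝ) * (k:ℝ)) r] at h3
          have h5 : (M:ℝ) * 1 ≤ (M:ℝ) * |(k:ℝ)| := mul_le_mul_of_nonneg_left hk1 hMR.le
          linarith [h3, habs, h5]
        calc (M:ℝ)^2 * (k:ℝ)^2 / 4 = ((M:ℝ) * |(k:ℝ)| / 2)^2 := by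
              have h6 : ((M:ℝ) * |(k:ℝ)| / 2)^2 = (M:ℝ)^2 * |(k:ℝ)|^2 / 4 := by ring
              rw [h6, sq_abs]
          _ ≤ |r - M * (k:ℝ)|^2 := by
              apply pow_le_pow_left₀ (by positivity) h2
          _ = (r - M * (k:ℝ))^2 := sq_abs _
    rw [div_le_iff₀ (by positivity : (0:ℝ) < 4*u)]
    have hbe : -b * (k:ℝ)^2 * (4*u) = -((M:ℝ)^2 * (k:ℝ)^2 / 4) := by
      rw [hb]; field_simp; ring
    rw [hbe]
    linarith [hsq]
  calc _ ≤ ∑' k : ℤ, ENNReal.ofReal (Real.exp (-b * (k:ℝ)^2)) := ENNReal.tsum_le_tsum hterm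
    _ ≤ ENNReal.ofReal (4 + 4 * (Real.sqrt b)⁻¹) := gauss_int b hbpos
    _ = ENNReal.ofReal (4 + 16 * Real.sqrt u / (M:ℝ)) := by
        congr 1
        have hsb : Real.sqrt b = M / (4 * Real.sqrt u) := by
          rw [hb]
          rw [show (16:ℝ) * u = (4 * Real.sqrt u)^2 by
            rw [mul_pow]; rw [Real.sq_sqrt hu.le]; norm_num]
          rw [show ((M:ℝ))^2 / (4 * Real.sqrt u)^2 = (M / (4 * Real.sqrt u))^2 by ring]
          exact Real.sqrt_sq (by positivity)
        rw [hsb]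
        have hsu : 0 < Real.sqrt u := Real.sqrt_pos.2 hu
        field_simp
        ring

-- pi tsum product lemma
lemma tsum_pi_prod : ∀ (n : ℕ) (F : Fin n → ℤ → ℝ≥0∞),
    ∑' j : Fin n → ℤ, ∏ m, F m (j m) = ∏ m, ∑' k, F m k := by
  intro n
  induction n with
  | zero =>
    intro F
    haveI : Unique (Fin 0 → ℤ) := ⟨⟨Fin.elim0⟩, fun f => funext fun m => m.elim0⟩
    rw [tsum_eq_single (default : Fin 0 → ℤ)
      (fun b hb => absurd (Subsingleton.elim b default) hb)]
    simp
  | succ n ih =>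
    intro F
    rw [← (Fin.consEquiv (fun _ : Fin (n+1) => ℤ)).tsum_eq]
    have h1 : ∀ p : ℤ × (Fin n → ℤ),
        (∏ m, F m ((Fin.consEquiv (fun _ : Fin (n+1) => ℤ)) (p.1, p.2) m))
          = F 0 p.1 * ∏ m : Fin n, F m.succ (p.2 m) := by
      intro p
      rw [Fin.prod_univ_succ]
      simp [Fin.consEquiv]
    calc ∑' p : ℤ × (Fin n → ℤ), ∏ m, F m ((Fin.consEquiv (fun _ : Fin (n+1) => ℤ)) p m)
        = ∑' p : ℤ × (Fin n → ℤ), F 0 p.1 * ∏ m : Fin n, F m.succ (p.2 m) := by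
          apply tsum_congr; intro p; rw [← h1 p]
      _ = ∑' (a : ℤ) (b : Fin n → ℤ), F 0 a * ∏ m : Fin n, F m.succ (b m) :=
          ENNReal.tsum_prod'
      _ = (∑' a : ℤ, F 0 a) * ∑' b : Fin n → ℤ, ∏ m : Fin n, F m.succ (b m) := by
          simp_rw [ENNReal.tsum_mul_left]
          rw [ENNReal.tsum_mul_right]
      _ = ∏ m, ∑' k, F m k := by
          rw [ih, Fin.prod_univ_succ]

lemma kernel_bound (d M : ℕ) (hM : 0 < M) (x y : Fin d → ℝ) (u : ℝ) (hu : 0 < u) :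
    (∑' j : Fin d → ℤ,
        ENNReal.ofReal ((4 * Real.pi * u) ^ (-(d:ℝ)/2)
          * Real.exp (-(∑ m, (x m - (y m + (M:ℝ) * ((j m : ℤ) : ℝ)))^2) / (4*u))))
      ≤ ENNReal.ofReal ((20:ℝ)^d) *
          max (ENNReal.ofReal (u ^ (-(d:ℝ)/2))) (ENNReal.ofReal ((M:ℝ) ^ (-(d:ℝ)))) := by
  have hMR : (0:ℝ) < M := by exact_mod_cast hM
  have h4pi : (0:ℝ) < 4 * Real.pi * u := by positivity
  set F : Fin d → ℤ → ℝ≥0∞ := fun m k =>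
    ENNReal.ofReal ((4 * Real.pi * u) ^ (-(1:ℝ)/2)
      * Real.exp (-(x m - (y m + (M:ℝ) * (k:ℝ)))^2 / (4*u))) with hF
  -- rewrite each term as a product
  have hterm : ∀ j : Fin d → ℤ,
      ENNReal.ofReal ((4 * Real.pi * u) ^ (-(d:ℝ)/2)
        * Real.exp (-(∑ m, (x m - (y m + (M:ℝ) * ((j m : ℤ) : ℝ)))^2) / (4*u)))
      = ∏ m, F m (j m) := by
    intro j
    rw [← ENNReal.ofReal_prod_of_nonneg (fun m _ => by positivity)]
    congr 1
    rw [Finset.prod_mul_distrib, Finset.prod_const, ← Real.exp_sum]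
    congr 1
    · rw [← Real.rpow_natCast ((4 * Real.pi * u) ^ (-(1:ℝ)/2)) (Finset.univ.card),
        ← Real.rpow_mul h4pi.le]
      norm_num [Finset.card_univ]
      ring_nf
    · rw [← Finset.sum_div, ← Finset.sum_neg_distrib]
  simp_rw [hterm]
  rw [tsum_pi_prod d F]
  -- per-coordinate bound
  set a : ℝ := u ^ (-(1:ℝ)/2) with ha
  set cM : ℝ := ((M:ℝ))⁻¹ with hcM
  have hsu : 0 < Real.sqrt u := Real.sqrt_pos.2 hu
  have hax : a = (Real.sqrt u)⁻¹ := by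
    rw [ha, Real.sqrt_eq_rpow, ← Real.rpow_neg_one (u ^ (1/(2:ℝ))), ← Real.rpow_mul hu.le]
    norm_num
  have hcoord : ∀ m : Fin d, (∑' k : ℤ, F m k) ≤ ENNReal.ofReal (20 * max a cM) := by
    intro m
    have hfac : (∑' k : ℤ, F m k)
        = ENNReal.ofReal ((4 * Real.pi * u) ^ (-(1:ℝ)/2)) *
            ∑' k : ℤ, ENNReal.ofReal (Real.exp (-(x m - (y m + (M:ℝ) * (k:ℝ)))^2 / (4*u))) := by
      rw [← ENNReal.tsum_mul_left]
      apply tsum_congr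
      intro k
      exact ENNReal.ofReal_mul (by positivity)
    rw [hfac]
    have h1 : ∑' k : ℤ, ENNReal.ofReal (Real.exp (-(x m - (y m + (M:ℝ) * (k:ℝ)))^2 / (4*u)))
        ≤ ENNReal.ofReal (4 + 16 * Real.sqrt u / (M:ℝ)) := by
      have := onedim M hM u (x m - y m) hu
      refine le_trans (le_of_eq ?_) this
      apply tsum_congr
      intro k
      congr 3
      ring
    calc _ ≤ ENNReal.ofReal ((4 * Real.pi * u) ^ (-(1:ℝ)/2)) *
          ENNReal.ofReal (4 + 16 * Real.sqrt u / (M:ℝ)) := by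
          exact mul_le_mul_right h1 _
      _ = ENNReal.ofReal ((4 * Real.pi * u) ^ (-(1:ℝ)/2) * (4 + 16 * Real.sqrt u / (M:ℝ))) := by
          rw [← ENNReal.ofReal_mul (by positivity)]
      _ ≤ ENNReal.ofReal (20 * max a cM) := by
          apply ENNReal.ofReal_le_ofReal
          -- real inequality
          have hb1 : (4 * Real.pi * u) ^ (-(1:ℝ)/2) ≤ a := by
            rw [ha]
            apply Real.rpow_le_rpow_of_nonpos hu
            · nlinarith [Real.pi_gt_three, hu]
            · norm_num
          have hb2 : (4 * Real.pi * u) ^ (-(1:ℝ)/2) * Real.sqrt u ≤ 1 := by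
            calc (4 * Real.pi * u) ^ (-(1:ℝ)/2) * Real.sqrt u
                ≤ a * Real.sqrt u := by
                  apply mul_le_mul_of_nonneg_right hb1 hsu.le
              _ = 1 := by rw [hax]; field_simp
          have hbnn : (0:ℝ) ≤ (4 * Real.pi * u) ^ (-(1:ℝ)/2) := by positivity
          have hann : (0:ℝ) ≤ a := by rw [hax]; positivity
          have hcnn : (0:ℝ) ≤ cM := by rw [hcM]; positivity
          have key : (4 * Real.pi * u) ^ (-(1:ℝ)/2) * (4 + 16 * Real.sqrt u / (M:ℝ))
              ≤ 4 * a + 16 * cM := by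
            have e1 : (4 * Real.pi * u) ^ (-(1:ℝ)/2) * (4 + 16 * Real.sqrt u / (M:ℝ))
                = 4 * ((4 * Real.pi * u) ^ (-(1:ℝ)/2))
                  + 16 * ((4 * Real.pi * u) ^ (-(1:ℝ)/2) * Real.sqrt u) * cM := by
              rw [hcM]; field_simp
            rw [e1]
            have e2 : 16 * ((4 * Real.pi * u) ^ (-(1:ℝ)/2) * Real.sqrt u) * cM ≤ 16 * 1 * cM := by
              apply mul_le_mul_of_nonneg_right _ hcnn
              nlinarith [hb2]
            nlinarith [hb1, e2]
          refine key.trans ?_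
          rcases le_total a cM with h | h
          · rw [max_eq_right h]; nlinarith
          · rw [max_eq_left h]; nlinarith
  calc (∏ m, ∑' k, F m k) ≤ ∏ _m : Fin d, ENNReal.ofReal (20 * max a cM) :=
        Finset.prod_le_prod' fun m _ => hcoord m
    _ = ENNReal.ofReal (20 * max a cM) ^ d := by
        rw [Finset.prod_const, Finset.card_univ, Fintype.card_fin]
    _ = ENNReal.ofReal ((20 * max a cM) ^ d) := by
        rw [ENNReal.ofReal_pow (by positivity)]
    _ ≤ ENNReal.ofReal ((20:ℝ)^d) *
          max (ENNReal.ofReal (u ^ (-(d:ℝ)/2))) (ENNReal.ofReal ((M:ℝ) ^ (-(d:ℝ)))) := by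
        have hanng : (0:ℝ) ≤ a := by
          rw [hax]; positivity
        have hcnng : (0:ℝ) ≤ cM := by rw [hcM]; positivity
        have had : a ^ d = u ^ (-(d:ℝ)/2) := by
          rw [ha, ← Real.rpow_natCast (u ^ (-(1:ℝ)/2)) d, ← Real.rpow_mul hu.le]
          congr 1
          ring
        have hcd : cM ^ d = (M:ℝ) ^ (-(d:ℝ)) := by
          rw [hcM, inv_pow, ← Real.rpow_natCast (M:ℝ) d, ← Real.rpow_neg (by positivity)]
        have hmaxd : (max a cM) ^ d = max (a ^ d) (cM ^ d) := by
          rcases le_total a cM with h | h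
          · rw [max_eq_right h, max_eq_right (pow_le_pow_left₀ hanng h d)]
          · rw [max_eq_left h, max_eq_left (pow_le_pow_left₀ hcnng h d)]
        rw [mul_pow, hmaxd, had, hcd, ENNReal.ofReal_mul (by positivity)]
        apply mul_le_mul_right
        rcases le_total (u ^ (-(d:ℝ)/2)) ((M:ℝ) ^ (-(d:ℝ))) with h | h
        · rw [max_eq_right h]
          exact le_max_of_le_right (le_refl _)
        · rw [max_eq_left h]
          exact le_max_of_le_left (le_refl _)

lemma rpow_le_lint (d : ℕ) (hd : 1 ≤ d) (u : ℝ) (hu : 0 < u) :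
    ENNReal.ofReal (u ^ (-(d:ℝ)/2))
      ≤ ENNReal.ofReal 3 *
          ∫⁻ l in Set.Ioi (0:ℝ), ENNReal.ofReal (Real.exp (-(l ^ (2/(d:ℝ)) * u))) := by
  have hdR : (0:ℝ) < d := by exact_mod_cast hd
  set c : ℝ := u ^ (-(d:ℝ)/2) with hc
  have hcpos : 0 < c := Real.rpow_pos_of_pos hu _
  have hmeas : Measurable fun l : ℝ => ENNReal.ofReal (Real.exp (-(l ^ (2/(d:ℝ)) * u))) := by
    apply ENNReal.measurable_ofReal.comp
    apply Real.measurable_exp.comp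
    apply Measurable.neg
    apply Measurable.mul _ measurable_const
    exact (Real.continuous_rpow_const (by positivity)).measurable
  have hsub : ∫⁻ l in Set.Ioc (0:ℝ) c, ENNReal.ofReal (Real.exp (-(l ^ (2/(d:ℝ)) * u)))
      ≤ ∫⁻ l in Set.Ioi (0:ℝ), ENNReal.ofReal (Real.exp (-(l ^ (2/(d:ℝ)) * u))) :=
    lintegral_mono_set Ioc_subset_Ioi_self
  have hlow : ENNReal.ofReal (Real.exp (-1)) * ENNReal.ofReal c
      ≤ ∫⁻ l in Set.Ioc (0:ℝ) c, ENNReal.ofReal (Real.exp (-(l ^ (2/(d:ℝ)) * u))) := by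
    have hle : ∀ l ∈ Set.Ioc (0:ℝ) c,
        ENNReal.ofReal (Real.exp (-1)) ≤ ENNReal.ofReal (Real.exp (-(l ^ (2/(d:ℝ)) * u))) := by
      intro l hl
      apply ENNReal.ofReal_le_ofReal
      apply Real.exp_le_exp.2
      have h1 : l ^ (2/(d:ℝ)) ≤ c ^ (2/(d:ℝ)) :=
        Real.rpow_le_rpow hl.1.le hl.2 (by positivity)
      have h2 : c ^ (2/(d:ℝ)) = u⁻¹ := by
        rw [hc, ← Real.rpow_mul hu.le]
        rw [show (-(d:ℝ)/2) * (2/(d:ℝ)) = -1 by field_simp]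
        exact Real.rpow_neg_one u
      have h3 : l ^ (2/(d:ℝ)) * u ≤ 1 := by
        calc l ^ (2/(d:ℝ)) * u ≤ u⁻¹ * u := by
              apply mul_le_mul_of_nonneg_right _ hu.le
              rw [← h2]; exact h1
          _ = 1 := by field_simp
      linarith
    calc ENNReal.ofReal (Real.exp (-1)) * ENNReal.ofReal c
        = ∫⁻ _l in Set.Ioc (0:ℝ) c, ENNReal.ofReal (Real.exp (-1)) := by
          rw [setLIntegral_const, Real.volume_Ioc, sub_zero]
      _ ≤ _ := setLIntegral_mono hmeas hle
  calc ENNReal.ofReal c ≤ ENNReal.ofReal 3 * (ENNReal.ofReal (Real.exp (-1)) * ENNReal.ofReal c) := by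
        rw [← ENNReal.ofReal_mul (Real.exp_nonneg _), ← ENNReal.ofReal_mul (by norm_num)]
        apply ENNReal.ofReal_le_ofReal
        rw [Real.exp_neg]
        have he3 : Real.exp 1 ≤ 3 := by
          have := Real.exp_one_lt_d9
          linarith
        have hepos := Real.exp_pos 1
        have hv : Real.exp 1 * (Real.exp 1)⁻¹ = 1 := mul_inv_cancel₀ hepos.ne'
        have h3v : 1 ≤ 3 * (Real.exp 1)⁻¹ := by
          nlinarith [hv, he3, inv_pos.2 hepos]
        nlinarith [h3v, hcpos.le]
    _ ≤ ENNReal.ofReal 3 * ∫⁻ l in Set.Ioi (0:ℝ), ENNReal.ofReal (Real.exp (-(l ^ (2/(d:ℝ)) * u))) :=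
        mul_le_mul_right (hlow.trans hsub) _

/-- For the subordinated periodized kernel
`p^M_t(x,y) = ∫ g^M_u(x,y) η_t(du)`, where η_t is a Borel probability measure on
(0,∞) with Laplace transform `e^{-tΦ(λ)}`, one has
`p^M_t(x,y) ≤ C max(∫_0^∞ e^{-tΦ(λ^{2/d})} dλ, M^{-d})`,
with `C > 0` depending only on d. -/
theorem stmt5 (d : ℕ) (hd : 1 ≤ d) :
    ∃ C > (0:ℝ), ∀ (Φ : ℝ → ℝ), Measurable Φ → (∀ l > (0:ℝ), 0 ≤ Φ l) →
      ∀ (η : ℝ → Measure ℝ), (∀ t > (0:ℝ), IsProbabilityMeasure (η t)) →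
      (∀ t > (0:ℝ), ∀ l > (0:ℝ),
        ∫⁻ u in Set.Ioi (0:ℝ), ENNReal.ofReal (Real.exp (-l * u)) ∂(η t)
          = ENNReal.ofReal (Real.exp (-(t * Φ l)))) →
      ∀ M : ℕ, 0 < M → ∀ x y : Fin d → ℝ, ∀ t > (0:ℝ),
      (∫⁻ u in Set.Ioi (0:ℝ),
          (∑' j : Fin d → ℤ,
            ENNReal.ofReal ((4 * Real.pi * u) ^ (-(d:ℝ)/2)
              * Real.exp (-(∑ m, (x m - (y m + (M:ℝ) * ((j m : ℤ) : ℝ)))^2) / (4*u)))) ∂(η t))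
        ≤ ENNReal.ofReal C *
            max (∫⁻ l in Set.Ioi (0:ℝ), ENNReal.ofReal (Real.exp (-(t * Φ (l ^ (2/(d:ℝ)))))))
                (ENNReal.ofReal ((M:ℝ) ^ (-(d:ℝ)))) := by
  refine ⟨(20:ℝ)^d * 4, by positivity, ?_⟩
  intro Φ hΦm hΦnn η hη hlap M hM x y t ht
  haveI : IsProbabilityMeasure (η t) := hη t ht
  set A : ℝ≥0∞ := ∫⁻ l in Set.Ioi (0:ℝ),
      ENNReal.ofReal (Real.exp (-(t * Φ (l ^ (2/(d:ℝ)))))) with hA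
  set B : ℝ≥0∞ := ENNReal.ofReal ((M:ℝ) ^ (-(d:ℝ))) with hB
  set g : ℝ → ℝ≥0∞ := fun u => ENNReal.ofReal (((Real.sqrt u)⁻¹)^d) with hg
  have hgmeas : Measurable g :=
    ENNReal.measurable_ofReal.comp ((Real.continuous_sqrt.measurable.inv).pow_const d)
  have hgu : ∀ u : ℝ, 0 < u → g u = ENNReal.ofReal (u ^ (-(d:ℝ)/2)) := by
    intro u hu
    have hax : (Real.sqrt u)⁻¹ = u ^ (-(1:ℝ)/2) := by
      rw [Real.sqrt_eq_rpow, ← Real.rpow_neg_one (u ^ (1/(2:ℝ))), ← Real.rpow_mul hu.le]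
      norm_num
    have had : ((Real.sqrt u)⁻¹)^d = u ^ (-(d:ℝ)/2) := by
      rw [hax, ← Real.rpow_natCast (u ^ (-(1:ℝ)/2)) d, ← Real.rpow_mul hu.le]
      congr 1
      ring
    rw [hg]
    simp only [had]
  -- step 1
  have step1 : (∫⁻ u in Set.Ioi (0:ℝ),
      (∑' j : Fin d → ℤ,
        ENNReal.ofReal ((4 * Real.pi * u) ^ (-(d:ℝ)/2)
          * Real.exp (-(∑ m, (x m - (y m + (M:ℝ) * ((j m : ℤ) : ℝ)))^2) / (4*u)))) ∂(η t))
      ≤ ENNReal.ofReal ((20:ℝ)^d) *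
          ((∫⁻ u in Set.Ioi (0:ℝ), g u ∂(η t)) + B) := by
    calc _ ≤ ∫⁻ u in Set.Ioi (0:ℝ), ENNReal.ofReal ((20:ℝ)^d) * (g u + B) ∂(η t) := by
          apply setLIntegral_mono' measurableSet_Ioi
          intro u hu
          have hu' : 0 < u := hu
          refine (kernel_bound d M hM x y u hu').trans ?_
          apply mul_le_mul_right
          rw [hgu u hu']
          exact max_le_add_of_nonneg zero_le zero_le
      _ = ENNReal.ofReal ((20:ℝ)^d) * ∫⁻ u in Set.Ioi (0:ℝ), (g u + B) ∂(η t) :=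
          lintegral_const_mul' _ _ ENNReal.ofReal_ne_top
      _ = ENNReal.ofReal ((20:ℝ)^d) *
          ((∫⁻ u in Set.Ioi (0:ℝ), g u ∂(η t)) + B * (η t) (Set.Ioi 0)) := by
          rw [lintegral_add_right _ measurable_const, setLIntegral_const]
      _ ≤ _ := by
          apply mul_le_mul_right
          apply add_le_add_right
          calc B * (η t) (Set.Ioi 0) ≤ B * 1 := mul_le_mul_right prob_le_one _
            _ = B := mul_one _
  -- step 2
  have step2 : (∫⁻ u in Set.Ioi (0:ℝ), g u ∂(η t)) ≤ ENNReal.ofReal 3 * A := by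
    have hjm : Measurable (Function.uncurry fun (u l : ℝ) =>
        ENNReal.ofReal (Real.exp (-(l ^ (2/(d:ℝ)) * u)))) := by
      apply ENNReal.measurable_ofReal.comp
      apply Real.measurable_exp.comp
      apply Measurable.neg
      exact (((Real.continuous_rpow_const (by positivity)).measurable).comp
        measurable_snd).mul measurable_fst
    calc (∫⁻ u in Set.Ioi (0:ℝ), g u ∂(η t))
        ≤ ∫⁻ u in Set.Ioi (0:ℝ), (ENNReal.ofReal 3 *
            ∫⁻ l in Set.Ioi (0:ℝ), ENNReal.ofReal (Real.exp (-(l ^ (2/(d:ℝ)) * u)))) ∂(η t) := by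
          apply setLIntegral_mono' measurableSet_Ioi
          intro u hu
          rw [hgu u hu]
          exact rpow_le_lint d hd u hu
      _ = ENNReal.ofReal 3 * ∫⁻ u in Set.Ioi (0:ℝ),
            (∫⁻ l in Set.Ioi (0:ℝ), ENNReal.ofReal (Real.exp (-(l ^ (2/(d:ℝ)) * u)))) ∂(η t) :=
          lintegral_const_mul' _ _ ENNReal.ofReal_ne_top
      _ = ENNReal.ofReal 3 * ∫⁻ l in Set.Ioi (0:ℝ),
            (∫⁻ u in Set.Ioi (0:ℝ), ENNReal.ofReal (Real.exp (-(l ^ (2/(d:ℝ)) * u))) ∂(η t)) := by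
          congr 1
          exact lintegral_lintegral_swap hjm.aemeasurable
      _ = ENNReal.ofReal 3 * A := by
          congr 1
          rw [hA]
          apply setLIntegral_congr_fun measurableSet_Ioi
          intro l hl
          have hlp : (0:ℝ) < l ^ (2/(d:ℝ)) := Real.rpow_pos_of_pos hl _
          have := hlap t ht (l ^ (2/(d:ℝ))) hlp
          beta_reduce
          rw [← this]
          apply setLIntegral_congr_fun measurableSet_Ioi
          intro u _
          beta_reduce
          rw [neg_mul]
  -- assemble
  calc _ ≤ ENNReal.ofReal ((20:ℝ)^d) * ((∫⁻ u in Set.Ioi (0:ℝ), g u ∂(η t)) + B) := step1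
    _ ≤ ENNReal.ofReal ((20:ℝ)^d) * (ENNReal.ofReal 3 * A + B) := by
        apply mul_le_mul_right
        exact add_le_add_left step2 _
    _ ≤ ENNReal.ofReal ((20:ℝ)^d) * (ENNReal.ofReal 3 * max A B + max A B) := by
        apply mul_le_mul_right
        exact add_le_add (mul_le_mul_right (le_max_left _ _) _) (le_max_right _ _)
    _ = ENNReal.ofReal ((20:ℝ)^d * 4) * max A B := by
        have h1 : ENNReal.ofReal 3 * max A B + max A B = (ENNReal.ofReal 3 + 1) * max A B := by
          rw [add_mul, one_mul]
        rw [h1, ← mul_assoc]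
        congr 1
        rw [← ENNReal.ofReal_one, ← ENNReal.ofReal_add (by norm_num) (by norm_num),
          ← ENNReal.ofReal_mul (by positivity)]
        norm_num
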